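/- For all real numbers ψ and ψ₀, log(1 + exp ψ) ≤ log(1 + exp ψ₀) + (exp ψ₀/(1 + exp ψ₀))·(ψ − ψ₀) + (1/8)·(ψ − ψ₀)², with equality when ψ = ψ₀. -/

import Mathlib

open Real

private lemma sigma_hasDerivAt (t : ℝ) :
    HasDerivAt (fun x => Real.exp x / (1 + Real.exp x))
      (Real.exp t / (1 + Real.exp t) ^ 2) t := by
  have h1 : (0:ℝ) < 1 + Real.exp t := by positivity
  have hd : HasDerivAt (fun x => Real.exp x / (1 + Real.exp x))
      ((Real.exp t * (1 + Real.exp t) - Real.exp t * Real.exp t) / (1 + Real.exp t) ^ 2) t :=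
    (Real.hasDerivAt_exp t).div ((Real.hasDerivAt_exp t).const_add 1) h1.ne'
  convert hd using 1
  field_simp
  ring

private lemma sigma_lipschitz_aux : Monotone (fun x => x / 4 - Real.exp x / (1 + Real.exp x)) := by
  apply monotone_of_hasDerivAt_nonneg
    (f' := fun x => 1 / 4 - Real.exp x / (1 + Real.exp x) ^ 2)
  · intro x
    exact ((hasDerivAt_id x).div_const 4).sub (sigma_hasDerivAt x)
  · intro x
    have h1 : (0:ℝ) < 1 + Real.exp x := by positivity
    have h2 : (0:ℝ) ≤ (1 - Real.exp x) ^ 2 := sq_nonneg _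
    have : Real.exp x / (1 + Real.exp x) ^ 2 ≤ 1 / 4 := by
      rw [div_le_div_iff₀ (by positivity) (by norm_num)]
      nlinarith
    simpa [sub_nonneg] using this

private lemma log_hasDerivAt (t : ℝ) :
    HasDerivAt (fun x => Real.log (1 + Real.exp x)) (Real.exp t / (1 + Real.exp t)) t := by
  have h1 : (0:ℝ) < 1 + Real.exp t := by positivity
  have := (((hasDerivAt_const t 1).add (Real.hasDerivAt_exp t)).log h1.ne')
  simpa using this

/-- Böhning's uniform quadratic majorization of the logistic log-partition
function: for all real `ψ`, `ψ₀`,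
`log(1 + e^ψ) ≤ log(1 + e^{ψ₀}) + (e^{ψ₀}/(1 + e^{ψ₀}))·(ψ − ψ₀) + (1/8)·(ψ − ψ₀)²`,
with equality when `ψ = ψ₀`. -/
theorem bohning_quadratic_bound (ψ ψ₀ : ℝ) :
    Real.log (1 + Real.exp ψ) ≤
        Real.log (1 + Real.exp ψ₀) +
          (Real.exp ψ₀ / (1 + Real.exp ψ₀)) * (ψ - ψ₀) + (1 / 8) * (ψ - ψ₀) ^ 2 ∧
      (ψ = ψ₀ →
        Real.log (1 + Real.exp ψ) =
          Real.log (1 + Real.exp ψ₀) +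
            (Real.exp ψ₀ / (1 + Real.exp ψ₀)) * (ψ - ψ₀) + (1 / 8) * (ψ - ψ₀) ^ 2) := by
  set σ : ℝ → ℝ := fun x => Real.exp x / (1 + Real.exp x) with hσ
  set g : ℝ → ℝ := fun t =>
    Real.log (1 + Real.exp ψ₀) + σ ψ₀ * (t - ψ₀) + (1 / 8) * (t - ψ₀) ^ 2
      - Real.log (1 + Real.exp t) with hg
  have hg' : ∀ t, HasDerivAt g (σ ψ₀ + (1 / 4) * (t - ψ₀) - σ t) t := by
    intro t
    have h1 : HasDerivAt (fun t : ℝ => Real.log (1 + Real.exp ψ₀) + σ ψ₀ * (t - ψ₀)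
        + (1 / 8) * (t - ψ₀) ^ 2) (σ ψ₀ + (1 / 4) * (t - ψ₀)) t := by
      have hid : HasDerivAt (fun t : ℝ => t - ψ₀) 1 t :=
        (hasDerivAt_id t).sub_const ψ₀
      have hsq : HasDerivAt (fun t : ℝ => (t - ψ₀) ^ 2) (2 * (t - ψ₀) ^ 1 * 1) t := hid.pow 2
      have := (((hid.const_mul (σ ψ₀)).const_add (Real.log (1 + Real.exp ψ₀))).add
        (hsq.const_mul (1 / 8)))
      exact this.congr_deriv (by ring)
    exact h1.sub (log_hasDerivAt t)
  have hgψ₀ : g ψ₀ = 0 := by simp [hg]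
  have key : 0 ≤ g ψ := by
    rcases le_total ψ₀ ψ with hle | hle
    · have mono : MonotoneOn g (Set.Ici ψ₀) := by
        apply monotoneOn_of_hasDerivWithinAt_nonneg (convex_Ici ψ₀)
          (f' := fun t => σ ψ₀ + (1 / 4) * (t - ψ₀) - σ t)
        · exact fun t _ => (hg' t).continuousAt.continuousWithinAt
        · exact fun t _ => (hg' t).hasDerivWithinAt
        · intro t ht
          rw [interior_Ici] at ht
          have := sigma_lipschitz_aux (le_of_lt ht)
          simp only [hσ] at this ⊢
          linarith
      have := mono (Set.self_mem_Ici) (Set.mem_Ici.2 hle) hle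
      linarith [hgψ₀]
    · have anti : AntitoneOn g (Set.Iic ψ₀) := by
        apply antitoneOn_of_hasDerivWithinAt_nonpos (convex_Iic ψ₀)
          (f' := fun t => σ ψ₀ + (1 / 4) * (t - ψ₀) - σ t)
        · exact fun t _ => (hg' t).continuousAt.continuousWithinAt
        · exact fun t _ => (hg' t).hasDerivWithinAt
        · intro t ht
          rw [interior_Iic] at ht
          have := sigma_lipschitz_aux (le_of_lt ht)
          simp only [hσ] at this ⊢
          linarith
      have := anti (Set.mem_Iic.2 hle) Set.self_mem_Iic hle
      linarith [hgψ₀]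
  constructor
  · simp only [hg] at key; linarith
  · intro h; subst h; simp
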